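/- Let X and Y be finitely generated free abelian groups (lattices), and let E be a finite subset of X × Y. For a group homomorphism f : X → Y, define E_f = { x ∈ X | (x, f(x)) ∈ E }. Then the set of homomorphisms f : X → Y such that E_f spans X ⊗ ℚ over ℚ is finite. -/

import Mathlib

open scoped TensorProduct

lemma one_tmul_eq_zero_imp {Y : Type*} [AddCommGroup Y] [Module ℤ Y] [Module.Free ℤ Y]
    {y : Y} (h : ((1 : ℚ) ⊗ₜ[ℤ] y : ℚ ⊗[ℤ] Y) = 0) : y = 0 := by
  let b := Module.Free.chooseBasis ℤ Y
  have hy : ∀ i, b.repr y i = 0 := by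
    intro i
    have := congrArg (fun t => (b.baseChange ℚ).repr t i) h
    simp only [map_zero, Finsupp.coe_zero, Pi.zero_apply, Module.Basis.baseChange_repr_tmul] at this
    have : ((b.repr y i : ℤ) : ℚ) = 0 := by simpa [zsmul_eq_mul] using this
    exact_mod_cast this
  have : b.repr y = 0 := Finsupp.ext hy
  simpa using congrArg b.repr.symm this

/-- Let `X` and `Y` be lattices (finitely generated free `ℤ`-modules) and
`E ⊆ X × Y` a finite subset.  For a `ℤ`-linear map `f : X → Y` set
`E_f = { x ∈ X | (x, f x) ∈ E }`.  Then the set of `f` for which the image of `E_f` in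
`ℚ ⊗_ℤ X` spans `ℚ ⊗_ℤ X` over `ℚ` is finite. -/
theorem finiteness_of_spanning_homs
    (X Y : Type*) [AddCommGroup X] [Module ℤ X] [Module.Free ℤ X] [Module.Finite ℤ X]
    [AddCommGroup Y] [Module ℤ Y] [Module.Free ℤ Y] [Module.Finite ℤ Y]
    (E : Set (X × Y)) (hE : E.Finite) :
    Set.Finite { f : X →ₗ[ℤ] Y |
      Submodule.span ℚ ((fun x : X => ((1 : ℚ) ⊗ₜ[ℤ] x : ℚ ⊗[ℤ] X)) ''
        { x : X | (x, f x) ∈ E }) = ⊤ } := by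
  set S := { f : X →ₗ[ℤ] Y |
      Submodule.span ℚ ((fun x : X => ((1 : ℚ) ⊗ₜ[ℤ] x : ℚ ⊗[ℤ] X)) ''
        { x : X | (x, f x) ∈ E }) = ⊤ } with hS
  have key : ∀ f ∈ S, ∀ g : X →ₗ[ℤ] Y,
      (∀ x : X, (x, f x) ∈ E → f x = g x) → f = g := by
    intro f hf g hfg
    -- the base change of f - g vanishes on a spanning set
    have hzero : ∀ x : X, (x, f x) ∈ E →
        ((f - g).baseChange ℚ) ((1 : ℚ) ⊗ₜ[ℤ] x) = 0 := by
      intro x hx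
      simp [LinearMap.baseChange_tmul, hfg x hx]
    have hker : Submodule.span ℚ ((fun x : X => ((1 : ℚ) ⊗ₜ[ℤ] x : ℚ ⊗[ℤ] X)) ''
        { x : X | (x, f x) ∈ E }) ≤ LinearMap.ker ((f - g).baseChange ℚ) := by
      apply Submodule.span_le.mpr
      rintro _ ⟨x, hx, rfl⟩
      exact LinearMap.mem_ker.mpr (hzero x hx)
    have htop : (f - g).baseChange ℚ = 0 :=
      LinearMap.ker_eq_top.mp (top_le_iff.mp (hf ▸ hker))
    have : ∀ x : X, (f - g) x = 0 := by
      intro x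
      apply one_tmul_eq_zero_imp (Y := Y)
      have := congrFun (congrArg DFunLike.coe htop) ((1 : ℚ) ⊗ₜ[ℤ] x)
      simp only [LinearMap.zero_apply] at this
      rw [← this, LinearMap.baseChange_tmul]
    ext x
    have := this x
    simp only [LinearMap.sub_apply, sub_eq_zero] at this
    exact this
  have hinj : Set.InjOn (fun f : X →ₗ[ℤ] Y => {p ∈ E | p.2 = f p.1}) S := by
    intro f hf g hg hfg
    apply key f hf g
    intro x hx
    exact (((Set.ext_iff.mp hfg (x, f x)).mp ⟨hx, rfl⟩).2 : f x = g x)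
  exact Set.Finite.of_finite_image
    (hE.finite_subsets.subset (by rintro _ ⟨f, _, rfl⟩; exact fun p hp => hp.1)) hinj
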